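/- Let X be a compact metric space, I : X → [0,∞] lower semicontinuous, and H̃ : X → ℝ continuous. Define s(u) = -inf{I(x) : x ∈ X, H̃(x) = u} for u ∈ ℝ (with s(u) = -∞ if the constraint set is empty). Then s is upper semicontinuous on ℝ. -/

import Mathlib

open scoped ENNReal

/-- The microcanonical entropy `s(u) = -inf{I(x) : H̃(x) = u}` (with `inf ∅ = +∞`,
so `s(u) = -∞` off the range of `H̃`). -/
noncomputable def microEnt {X : Type*} (I : X → ℝ≥0∞) (H : X → ℝ) (u : ℝ) : EReal :=
  -(⨅ x : {y : X // H y = u}, ((I x.1 : ℝ≥0∞) : EReal))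

/-- On a compact metric space, with `I` lower semicontinuous and `H̃` continuous,
the microcanonical entropy is upper semicontinuous on `ℝ`. -/
theorem stmt4 {X : Type*} [MetricSpace X] [CompactSpace X]
    (I : X → ℝ≥0∞) (hI : LowerSemicontinuous I)
    (H : X → ℝ) (hH : Continuous H) :
    UpperSemicontinuous (microEnt I H) := by
  have hJ : LowerSemicontinuous (fun x => ((I x : ℝ≥0∞) : EReal)) :=
    continuous_coe_ennreal_ereal.comp_lowerSemicontinuous hI
      (fun a b hab => EReal.coe_ennreal_le_coe_ennreal_iff.mpr hab)
  intro u y hy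
  rw [microEnt, EReal.neg_lt_comm] at hy
  set c : EReal := -y with hc
  obtain ⟨c', hcc', hc'⟩ := exists_between hy
  set K : Set X := {x | ((I x : ℝ≥0∞) : EReal) ≤ c'} with hK
  have hKclosed : IsClosed K := by
    have : IsOpen {x | c' < ((I x : ℝ≥0∞) : EReal)} :=
      (lowerSemicontinuous_iff_isOpen_preimage.mp hJ) c'
    have : IsOpen Kᶜ := by
      convert this using 1
      ext x; simp [hK, not_le]
    simpa using this.isClosed_compl
  have hKcomp : IsCompact K := hKclosed.isCompact
  have himg : IsClosed (H '' K) := (hKcomp.image hH).isClosed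
  have hu : u ∉ H '' K := by
    rintro ⟨x, hxK, hxu⟩
    have h1 : (⨅ x : {y : X // H y = u}, ((I x.1 : ℝ≥0∞) : EReal)) ≤ (I x : EReal) :=
      iInf_le _ (⟨x, hxu⟩ : {y : X // H y = u})
    exact absurd (h1.trans hxK) (not_le.mpr hc')
  have hopen : IsOpen (H '' K)ᶜ := himg.isOpen_compl
  filter_upwards [hopen.mem_nhds hu] with u' hu'
  rw [microEnt, EReal.neg_lt_comm]
  refine lt_of_lt_of_le hcc' (le_iInf fun x => ?_)
  by_contra hx
  exact hu' ⟨x.1, show ((I x.1 : ℝ≥0∞) : EReal) ≤ c' from (lt_of_not_ge hx).le, x.2⟩
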